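/- (Switching principle I, second identity.) Let G = (V,E) be a finite simple graph with edge weights K : E → ℂ, let M1, M2 ⊆ V be disjoint, and let x, y ∈ V ∖ (M1 ∪ M2) be distinct. Then for any finite list C of pairs of vertices taken from M1 ∪ M2, Z^{(2)}_{G,K}(M1 ∪ {x}, M2 ∪ {y}; x ↔ y and C) = Z^{(2)}_{G,K}(M1 ∪ {y}, M2 ∪ {x}; x ↔ y and C). -/

import Mathlib

open scoped Classical symmDiff
open Finset

/-- `ω` is a dimer cover (perfect matching) of the graph `G` depleted by the
monomer set `M`. -/
def IsDimerCover {V : Type*} (G : SimpleGraph V) (M : Finset V)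
    (ω : Finset (Sym2 V)) : Prop :=
  (∀ e ∈ ω, e ∈ G.edgeSet) ∧
  (∀ v ∈ M, ∀ e ∈ ω, v ∉ e) ∧
  (∀ v : V, v ∉ M → ∃! e, e ∈ ω ∧ v ∈ e)

/-- The spanning subgraph of the overlay `ω₁ Δ ω₂`. -/
def symmGraph {V : Type*} [DecidableEq V] (ω₁ ω₂ : Finset (Sym2 V)) : SimpleGraph V :=
  SimpleGraph.fromEdgeSet (↑(ω₁ ∆ ω₂) : Set (Sym2 V))

/-- The double dimer partition function `Z²_{G,K}(M₁, M₂; C)` restricted by the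
connection conditions `C`: a list of pairs `(u, v)` each required to lie in the
same connected component of the overlay `ω₁ Δ ω₂`. -/
noncomputable def Zdouble {V : Type*} [Fintype V] [DecidableEq V]
    (G : SimpleGraph V) (K : Sym2 V → ℂ) (M₁ M₂ : Finset V) (C : List (V × V)) : ℂ :=
  ∑ p ∈ Finset.univ.filter (fun p : Finset (Sym2 V) × Finset (Sym2 V) =>
      IsDimerCover G M₁ p.1 ∧ IsDimerCover G M₂ p.2 ∧
      ∀ c ∈ C, (symmGraph p.1 p.2).Reachable c.1 c.2),
    (∏ b ∈ p.1, K b) * ∏ b ∈ p.2, K b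

set_option linter.unusedSectionVars false

section Aux

variable {V : Type*} [DecidableEq V]

lemma mem_support_of_mem_edges' {G : SimpleGraph V} {a b v : V} (p : G.Walk a b)
    {e : Sym2 V} (he : e ∈ p.edges) (hv : v ∈ e) : v ∈ p.support := by
  induction e with
  | h s t =>
    rcases Sym2.mem_iff.mp hv with rfl | rfl
    · exact p.fst_mem_support_of_mem_edges he
    · exact p.snd_mem_support_of_mem_edges he

lemma exists_edge_start' {G : SimpleGraph V} {a b : V} (p : G.Walk a b) (hab : a ≠ b) :
    ∃ e ∈ p.edges, a ∈ e := by
  cases p with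
  | nil => exact absurd rfl hab
  | cons h q => exact ⟨_, List.mem_cons_self, Sym2.mem_mk_left _ _⟩

lemma internal_two_edges' {G : SimpleGraph V} {a b : V} (p : G.Walk a b) :
    p.IsPath → ∀ v, v ∈ p.support → v ≠ a → v ≠ b →
    ∃ e₁ ∈ p.edges, ∃ e₂ ∈ p.edges, e₁ ≠ e₂ ∧ v ∈ e₁ ∧ v ∈ e₂ := by
  induction p with
  | nil =>
    intro _ v hv hva _
    simp only [SimpleGraph.Walk.support_nil, List.mem_singleton] at hv
    exact absurd hv hva
  | @cons u w c h q ih =>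
    intro hp v hv hva hvb
    rw [SimpleGraph.Walk.cons_isPath_iff] at hp
    rw [SimpleGraph.Walk.support_cons, List.mem_cons] at hv
    rcases hv with rfl | hv
    · exact absurd rfl hva
    by_cases hvw : v = w
    · subst hvw
      cases q with
      | nil => exact absurd rfl hvb
      | @cons _ w₂ _ h' r =>
        refine ⟨s(u, v), ?_, s(v, w₂), ?_, ?_, ?_, ?_⟩
        · simp
        · simp
        · intro hEq
          rw [Sym2.eq_iff] at hEq
          rcases hEq with ⟨rfl, _⟩ | ⟨rfl, hvv⟩
          · exact h.ne rfl
          · exact hp.2 (by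
              rw [SimpleGraph.Walk.support_cons, List.mem_cons]
              exact Or.inr r.start_mem_support)
        · simp
        · simp
    · obtain ⟨e₁, he₁, e₂, he₂, hne, hv1, hv2⟩ := ih hp.1 v hv hvw hvb
      exact ⟨e₁, by simp [he₁], e₂, by simp [he₂], hne, hv1, hv2⟩

lemma filter_symmDiff'' {v : V} (s t : Finset (Sym2 V)) :
    (s ∆ t).filter (fun e => v ∈ e) = s.filter (fun e => v ∈ e) ∆ t.filter (fun e => v ∈ e) := by
  ext e
  simp only [Finset.mem_symmDiff, Finset.mem_filter]
  tauto

lemma filter_eq_empty_of_cover {G : SimpleGraph V} {M : Finset V} {ω : Finset (Sym2 V)}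
    (h : IsDimerCover G M ω) {v : V} (hv : v ∈ M) :
    ω.filter (fun e => v ∈ e) = ∅ := by
  rw [Finset.filter_eq_empty_iff]
  exact fun {e} he hve => h.2.1 v hv e he hve

lemma filter_eq_singleton_of_cover {G : SimpleGraph V} {M : Finset V} {ω : Finset (Sym2 V)}
    (h : IsDimerCover G M ω) {v : V} (hv : v ∉ M) :
    ∃ e, ω.filter (fun e => v ∈ e) = {e} := by
  obtain ⟨e, ⟨he, hve⟩, hu⟩ := h.2.2 v hv
  refine ⟨e, ?_⟩
  ext a
  simp only [Finset.mem_filter, Finset.mem_singleton]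
  constructor
  · rintro ⟨ha, hva⟩; exact hu a ⟨ha, hva⟩
  · rintro rfl; exact ⟨he, hve⟩

lemma cover_of_filters {G : SimpleGraph V} {M : Finset V} {ω : Finset (Sym2 V)}
    (hE : ∀ e ∈ ω, e ∈ G.edgeSet)
    (h0 : ∀ v ∈ M, ω.filter (fun e => v ∈ e) = ∅)
    (h1 : ∀ v, v ∉ M → ∃ e, ω.filter (fun e => v ∈ e) = {e}) :
    IsDimerCover G M ω := by
  refine ⟨hE, fun v hv e he hve => ?_, fun v hv => ?_⟩
  · have hmem : e ∈ ω.filter (fun e => v ∈ e) := Finset.mem_filter.mpr ⟨he, hve⟩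
    rw [h0 v hv] at hmem
    exact absurd hmem (Finset.notMem_empty e)
  · obtain ⟨e, he⟩ := h1 v hv
    have hee : e ∈ ω.filter (fun e => v ∈ e) := he ▸ Finset.mem_singleton_self e
    refine ⟨e, ⟨(Finset.mem_filter.mp hee).1, (Finset.mem_filter.mp hee).2⟩, ?_⟩
    rintro a ⟨ha, hva⟩
    have : a ∈ ω.filter (fun e => v ∈ e) := Finset.mem_filter.mpr ⟨ha, hva⟩
    rw [he] at this
    exact Finset.mem_singleton.mp this

end Aux

section Aux2

variable {V : Type*} [DecidableEq V]

noncomputable def pathEdges (H : SimpleGraph V) (x y : V) : Finset (Sym2 V) :=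
  if h : H.Reachable x y then (Classical.choice h).toPath.1.edges.toFinset else ∅

lemma pathEdges_spec {H : SimpleGraph V} {x y : V} (h : H.Reachable x y) :
    ∃ p : H.Walk x y, p.IsPath ∧ p.edges.toFinset = pathEdges H x y := by
  refine ⟨(Classical.choice h).toPath.1, (Classical.choice h).toPath.2, ?_⟩
  rw [pathEdges, dif_pos h]

lemma pathEdges_subset {H : SimpleGraph V} {x y : V} :
    ∀ e ∈ pathEdges H x y, e ∈ H.edgeSet := by
  intro e he
  rw [pathEdges] at he
  split at he
  · rw [List.mem_toFinset] at he
    exact SimpleGraph.Walk.edges_subset_edgeSet _ he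
  · exact absurd he (Finset.notMem_empty e)

lemma symmDiff_swap' (a b q : Finset (Sym2 V)) : (a ∆ q) ∆ (b ∆ q) = a ∆ b := by
  rw [symmDiff_comm b q, symmDiff_assoc, symmDiff_symmDiff_cancel_left]

lemma symmGraph_comm (ω₁ ω₂ : Finset (Sym2 V)) : symmGraph ω₂ ω₁ = symmGraph ω₁ ω₂ := by
  unfold symmGraph
  rw [symmDiff_comm]

lemma symmGraph_swap (ω₁ ω₂ q : Finset (Sym2 V)) :
    symmGraph (ω₁ ∆ q) (ω₂ ∆ q) = symmGraph ω₁ ω₂ := by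
  unfold symmGraph
  rw [symmDiff_swap']

lemma walk_transfer {H H' : SimpleGraph V} (h : H = H') {a b : V} (p : H.Walk a b)
    (hp : p.IsPath) : ∃ q : H'.Walk a b, q.IsPath ∧ q.edges = p.edges := by
  subst h
  exact ⟨p, hp, rfl⟩

lemma prod_swap_aux (K : Sym2 V → ℂ) {ω₁ ω₂ Q : Finset (Sym2 V)} (hQ : ∀ e ∈ Q, e ∈ ω₁ ∆ ω₂) :
    (∏ b ∈ ω₁ ∆ Q, K b) * ∏ b ∈ ω₂ ∆ Q, K b = (∏ b ∈ ω₁, K b) * ∏ b ∈ ω₂, K b := by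
  have hsd : ∀ (a : Finset (Sym2 V)), a ∆ Q = (a \ Q) ∪ (Q \ a) := by
    intro a; rw [symmDiff_def, sup_eq_union]
  have hsplit : ∀ (a : Finset (Sym2 V)),
      (∏ b ∈ a ∆ Q, K b) = (∏ b ∈ a \ Q, K b) * ∏ b ∈ Q \ a, K b := by
    intro a
    rw [hsd, Finset.prod_union disjoint_sdiff_sdiff]
  have hwhole : ∀ (a : Finset (Sym2 V)),
      (∏ b ∈ a, K b) = (∏ b ∈ a \ Q, K b) * ∏ b ∈ Q ∩ a, K b := by
    intro a
    rw [Finset.inter_comm, ← Finset.prod_union (Finset.sdiff_disjoint.mono_right Finset.inter_subset_right),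
      Finset.sdiff_union_inter]
  have h1 : Q \ ω₁ = Q ∩ ω₂ := by
    ext e
    simp only [Finset.mem_sdiff, Finset.mem_inter]
    constructor
    · rintro ⟨hq, h1⟩
      rcases Finset.mem_symmDiff.mp (hQ e hq) with ⟨ha, _⟩ | ⟨hb, _⟩
      · exact absurd ha h1
      · exact ⟨hq, hb⟩
    · rintro ⟨hq, h2⟩
      rcases Finset.mem_symmDiff.mp (hQ e hq) with ⟨_, hn⟩ | ⟨_, hn⟩
      · exact absurd h2 hn
      · exact ⟨hq, hn⟩
  have h2 : Q \ ω₂ = Q ∩ ω₁ := by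
    ext e
    simp only [Finset.mem_sdiff, Finset.mem_inter]
    constructor
    · rintro ⟨hq, h1⟩
      rcases Finset.mem_symmDiff.mp (hQ e hq) with ⟨ha, _⟩ | ⟨hb, _⟩
      · exact ⟨hq, ha⟩
      · exact absurd hb h1
    · rintro ⟨hq, h2'⟩
      rcases Finset.mem_symmDiff.mp (hQ e hq) with ⟨_, hn⟩ | ⟨_, hn⟩
      · exact ⟨hq, hn⟩
      · exact absurd h2' hn
  rw [hsplit, hsplit, hwhole ω₁, hwhole ω₂, h1, h2]
  ring

end Aux2

section Main

variable {V : Type*} [DecidableEq V]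

lemma swap_cover_one {G : SimpleGraph V} {M₁ M₂ : Finset V} {x y : V}
    (hdisj : ∀ v, v ∈ M₁ → v ∉ M₂)
    (hx1 : x ∉ M₁) (hx2 : x ∉ M₂) (hy1 : y ∉ M₁) (hy2 : y ∉ M₂) (hxy : x ≠ y)
    {ω₁ ω₂ : Finset (Sym2 V)}
    (h₁ : IsDimerCover G (M₁ ∪ {x}) ω₁) (h₂ : IsDimerCover G (M₂ ∪ {y}) ω₂)
    (p : (symmGraph ω₁ ω₂).Walk x y) (hp : p.IsPath) :
    IsDimerCover G (M₁ ∪ {y}) (ω₁ ∆ p.edges.toFinset) := by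
  classical
  set Q := p.edges.toFinset with hQdef
  have hQS : ∀ e ∈ Q, e ∈ ω₁ ∆ ω₂ := by
    intro e he
    rw [hQdef, List.mem_toFinset] at he
    have h' := p.edges_subset_edgeSet he
    rw [symmGraph, SimpleGraph.edgeSet_fromEdgeSet] at h'
    exact_mod_cast h'.1
  have hQv : ∀ v : V, Q.filter (fun e => v ∈ e) ⊆
      (ω₁.filter (fun e => v ∈ e)) ∆ (ω₂.filter (fun e => v ∈ e)) := by
    intro v e he
    rw [Finset.mem_filter] at he
    rw [Finset.mem_symmDiff]
    rcases Finset.mem_symmDiff.mp (hQS e he.1) with ⟨h1, h2⟩ | ⟨h1, h2⟩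
    · exact Or.inl ⟨Finset.mem_filter.mpr ⟨h1, he.2⟩, fun hc => h2 (Finset.mem_filter.mp hc).1⟩
    · exact Or.inr ⟨Finset.mem_filter.mpr ⟨h1, he.2⟩, fun hc => h2 (Finset.mem_filter.mp hc).1⟩
  have hQsupp : ∀ v : V, v ∉ p.support → Q.filter (fun e => v ∈ e) = ∅ := by
    intro v hv
    rw [Finset.filter_eq_empty_iff]
    intro e he hve
    exact hv (mem_support_of_mem_edges' p (List.mem_toFinset.mp he) hve)
  have hQx : (Q.filter (fun e => x ∈ e)).Nonempty := by
    obtain ⟨e, he, hxe⟩ := exists_edge_start' p hxy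
    exact ⟨e, Finset.mem_filter.mpr ⟨List.mem_toFinset.mpr he, hxe⟩⟩
  have hQy : (Q.filter (fun e => y ∈ e)).Nonempty := by
    obtain ⟨e, he, hye⟩ := exists_edge_start' p.reverse hxy.symm
    rw [SimpleGraph.Walk.edges_reverse, List.mem_reverse] at he
    exact ⟨e, Finset.mem_filter.mpr ⟨List.mem_toFinset.mpr he, hye⟩⟩
  refine cover_of_filters ?_ ?_ ?_
  · intro e he
    rcases Finset.mem_symmDiff.mp he with ⟨h1, _⟩ | ⟨h1, _⟩
    · exact h₁.1 e h1
    · rcases Finset.mem_symmDiff.mp (hQS e h1) with ⟨h2, _⟩ | ⟨h2, _⟩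
      · exact h₁.1 e h2
      · exact h₂.1 e h2
  · intro v hv
    rw [filter_symmDiff'']
    rcases Finset.mem_union.mp hv with hvM | hvy
    · -- v ∈ M₁ : both filters empty
      have hF1 : ω₁.filter (fun e => v ∈ e) = ∅ :=
        filter_eq_empty_of_cover h₁ (Finset.mem_union.mpr (Or.inl hvM))
      have hQv0 : Q.filter (fun e => v ∈ e) = ∅ := by
        by_contra hne
        obtain ⟨e, he⟩ := Finset.nonempty_of_ne_empty hne
        have hvsupp : v ∈ p.support :=
          mem_support_of_mem_edges' p
            (List.mem_toFinset.mp (Finset.mem_filter.mp he).1) (Finset.mem_filter.mp he).2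
        have hvx : v ≠ x := fun h => hx1 (h ▸ hvM)
        have hvy' : v ≠ y := fun h => hy1 (h ▸ hvM)
        obtain ⟨e₁, he₁, e₂, he₂, hne12, hv1, hv2⟩ :=
          internal_two_edges' p hp v hvsupp hvx hvy'
        obtain ⟨f, hF2⟩ := filter_eq_singleton_of_cover h₂
          (by simp only [Finset.mem_union, Finset.mem_singleton]
              exact fun h => h.elim (hdisj v hvM) hvy')
        have hsub := hQv v
        rw [hF1, hF2] at hsub
        have hmem1 : e₁ ∈ (∅ : Finset (Sym2 V)) ∆ {f} :=
          hsub (Finset.mem_filter.mpr ⟨List.mem_toFinset.mpr he₁, hv1⟩)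
        have hmem2 : e₂ ∈ (∅ : Finset (Sym2 V)) ∆ {f} :=
          hsub (Finset.mem_filter.mpr ⟨List.mem_toFinset.mpr he₂, hv2⟩)
        rw [Finset.mem_symmDiff] at hmem1 hmem2
        simp only [Finset.notMem_empty, Finset.mem_singleton, false_and, true_and,
          and_true, false_or, not_false_iff] at hmem1 hmem2
        exact hne12 (hmem1.trans hmem2.symm)
      rw [hF1, hQv0]
      simp
    · -- v = y
      rw [Finset.mem_singleton] at hvy
      subst hvy
      obtain ⟨e, hF1⟩ := filter_eq_singleton_of_cover h₁
        (by simp only [Finset.mem_union, Finset.mem_singleton]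
            exact fun h => h.elim hy1 (fun h' => hxy h'.symm))
      have hF2 : ω₂.filter (fun e => v ∈ e) = ∅ :=
        filter_eq_empty_of_cover h₂ (Finset.mem_union.mpr (Or.inr (Finset.mem_singleton_self v)))
      have hsub := hQv v
      rw [hF1, hF2] at hsub
      have hsub' : Q.filter (fun e => v ∈ e) ⊆ {e} := by
        intro a ha
        have := hsub ha
        rw [Finset.mem_symmDiff] at this
        simp only [Finset.mem_singleton, Finset.notMem_empty] at this
        tauto
      have hQeq : Q.filter (fun e => v ∈ e) = {e} := by
        rcases Finset.subset_singleton_iff.mp hsub' with h' | h'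
        · exact absurd h' hQy.ne_empty
        · exact h'
      rw [hF1, hQeq, symmDiff_self]
      rfl
  · intro v hv
    rw [filter_symmDiff'']
    simp only [Finset.mem_union, Finset.mem_singleton, not_or] at hv
    obtain ⟨hvM1, hvy⟩ := hv
    by_cases hvx : v = x
    · subst hvx
      have hF1 : ω₁.filter (fun e => v ∈ e) = ∅ :=
        filter_eq_empty_of_cover h₁ (Finset.mem_union.mpr (Or.inr (Finset.mem_singleton_self v)))
      obtain ⟨f, hF2⟩ := filter_eq_singleton_of_cover h₂
        (by simp only [Finset.mem_union, Finset.mem_singleton]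
            exact fun h => h.elim hx2 hvy)
      have hsub := hQv v
      rw [hF1, hF2] at hsub
      have hsub' : Q.filter (fun e => v ∈ e) ⊆ {f} := by
        intro a ha
        have := hsub ha
        rw [Finset.mem_symmDiff] at this
        simp only [Finset.mem_singleton, Finset.notMem_empty] at this
        tauto
      have hQeq : Q.filter (fun e => v ∈ e) = {f} := by
        rcases Finset.subset_singleton_iff.mp hsub' with h' | h'
        · exact absurd h' hQx.ne_empty
        · exact h'
      refine ⟨f, ?_⟩
      rw [hF1, hQeq]
      ext a
      rw [Finset.mem_symmDiff]
      simp
    · -- v ∉ M₁ ∪ {x}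
      obtain ⟨e₁, hF1⟩ := filter_eq_singleton_of_cover h₁
        (by simp only [Finset.mem_union, Finset.mem_singleton]
            exact fun h => h.elim hvM1 hvx)
      by_cases hvs : v ∈ p.support
      · -- internal vertex
        obtain ⟨f₁, hf₁, f₂, hf₂, hne12, hvf1, hvf2⟩ :=
          internal_two_edges' p hp v hvs hvx hvy
        have hm1 : f₁ ∈ Q.filter (fun e => v ∈ e) :=
          Finset.mem_filter.mpr ⟨List.mem_toFinset.mpr hf₁, hvf1⟩
        have hm2 : f₂ ∈ Q.filter (fun e => v ∈ e) :=
          Finset.mem_filter.mpr ⟨List.mem_toFinset.mpr hf₂, hvf2⟩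
        have hvM2 : v ∉ M₂ ∪ {y} := by
          simp only [Finset.mem_union, Finset.mem_singleton]
          rintro (hvM2 | rfl)
          · -- v ∈ M₂ : ω₂ filter empty, symmdiff ⊆ {e₁}, contradiction
            have hF2 : ω₂.filter (fun e => v ∈ e) = ∅ :=
              filter_eq_empty_of_cover h₂ (Finset.mem_union.mpr (Or.inl hvM2))
            have hsub := hQv v
            rw [hF1, hF2] at hsub
            have h1' := hsub hm1
            have h2' := hsub hm2
            rw [Finset.mem_symmDiff] at h1' h2'
            simp only [Finset.mem_singleton, Finset.notMem_empty, false_and, or_false] at h1' h2'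
            exact hne12 (h1'.1.trans h2'.1.symm)
          · exact hvy rfl
        obtain ⟨e₂, hF2⟩ := filter_eq_singleton_of_cover h₂ hvM2
        have hsub := hQv v
        rw [hF1, hF2] at hsub
        have hne' : e₁ ≠ e₂ := by
          rintro rfl
          rw [symmDiff_self] at hsub
          have := hsub hm1
          exact absurd this (Finset.notMem_empty f₁)
        have hpair : ({e₁} : Finset (Sym2 V)) ∆ {e₂} = {e₁, e₂} := by
          ext a
          rw [Finset.mem_symmDiff]
          simp only [Finset.mem_singleton, Finset.mem_insert]
          constructor
          · rintro (⟨rfl, _⟩ | ⟨rfl, _⟩)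
            · exact Or.inl rfl
            · exact Or.inr rfl
          · rintro (rfl | rfl)
            · exact Or.inl ⟨rfl, hne'⟩
            · exact Or.inr ⟨rfl, fun h => hne' h.symm⟩
        rw [hpair] at hsub
        have hQeq : Q.filter (fun e => v ∈ e) = {e₁, e₂} := by
          apply Finset.Subset.antisymm hsub
          have h1' := hsub hm1
          have h2' := hsub hm2
          simp only [Finset.mem_insert, Finset.mem_singleton] at h1' h2'
          intro a ha
          simp only [Finset.mem_insert, Finset.mem_singleton] at ha
          rcases h1' with rfl | rfl <;> rcases h2' with h2' | h2' <;>
            first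
              | (exact absurd h2' hne12)
              | (rcases ha with rfl | rfl <;> simp_all)
        refine ⟨e₂, ?_⟩
        rw [hF1, hQeq]
        ext a
        rw [Finset.mem_symmDiff]
        simp only [Finset.mem_singleton, Finset.mem_insert]
        constructor
        · rintro (⟨rfl, h⟩ | ⟨(rfl | rfl), h⟩)
          · exact absurd (Or.inl rfl) h
          · exact absurd rfl h
          · rfl
        · rintro rfl
          exact Or.inr ⟨Or.inr rfl, fun h => hne' h.symm⟩
      · -- off the path
        refine ⟨e₁, ?_⟩
        rw [hF1, hQsupp v hvs]
        simp
end Main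

section Glue

variable {V : Type*} [DecidableEq V]

lemma pathEdges_subset_symmDiff (ω₁ ω₂ : Finset (Sym2 V)) (x y : V) :
    ∀ e ∈ pathEdges (symmGraph ω₁ ω₂) x y, e ∈ ω₁ ∆ ω₂ := by
  intro e he
  have h' := pathEdges_subset e he
  rw [symmGraph, SimpleGraph.edgeSet_fromEdgeSet] at h'
  exact_mod_cast h'.1

lemma switch_pair {G : SimpleGraph V} {M₁ M₂ : Finset V} {x y : V}
    (hdisj : ∀ v, v ∈ M₁ → v ∉ M₂)
    (hx1 : x ∉ M₁) (hx2 : x ∉ M₂) (hy1 : y ∉ M₁) (hy2 : y ∉ M₂) (hxy : x ≠ y)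
    {ω₁ ω₂ : Finset (Sym2 V)}
    (h₁ : IsDimerCover G (M₁ ∪ {x}) ω₁) (h₂ : IsDimerCover G (M₂ ∪ {y}) ω₂)
    (p : (symmGraph ω₁ ω₂).Walk x y) (hp : p.IsPath) :
    IsDimerCover G (M₁ ∪ {y}) (ω₁ ∆ p.edges.toFinset) ∧
    IsDimerCover G (M₂ ∪ {x}) (ω₂ ∆ p.edges.toFinset) := by
  constructor
  · exact swap_cover_one hdisj hx1 hx2 hy1 hy2 hxy h₁ h₂ p hp
  · obtain ⟨q, hq, hqe⟩ := walk_transfer (symmGraph_comm ω₁ ω₂).symm p.reverse hp.reverse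
    have hres := swap_cover_one (M₁ := M₂) (M₂ := M₁) (x := y) (y := x)
      (fun v hv2 hv1 => hdisj v hv1 hv2) hy2 hy1 hx2 hx1 hxy.symm h₂ h₁ q hq
    have hiq : q.edges.toFinset = p.edges.toFinset := by
      rw [hqe, SimpleGraph.Walk.edges_reverse, List.toFinset_reverse]
    rwa [hiq] at hres

end Glue

/-- Switching principle I, second identity: the monomers `x` and `y`, connected by
a path of the overlay, may be exchanged between the two monomer sets. -/
theorem switching_principle_I_second {V : Type*} [Fintype V] [DecidableEq V]
    (G : SimpleGraph V) (K : Sym2 V → ℂ) (M₁ M₂ : Finset V) (x y : V)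
    (hdisj : Disjoint M₁ M₂) (hxy : x ≠ y)
    (hx : x ∉ M₁ ∪ M₂) (hy : y ∉ M₁ ∪ M₂)
    (C : List (V × V)) (hC : ∀ c ∈ C, c.1 ∈ M₁ ∪ M₂ ∧ c.2 ∈ M₁ ∪ M₂) :
    Zdouble G K (M₁ ∪ {x}) (M₂ ∪ {y}) ((x, y) :: C) =
      Zdouble G K (M₁ ∪ {y}) (M₂ ∪ {x}) ((x, y) :: C) := by
  classical
  simp only [Finset.mem_union, not_or] at hx hy
  obtain ⟨hx1, hx2⟩ := hx
  obtain ⟨hy1, hy2⟩ := hy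
  have hdisj' : ∀ v, v ∈ M₁ → v ∉ M₂ := fun v hv hv2 => Finset.disjoint_left.mp hdisj hv hv2
  unfold Zdouble
  refine Finset.sum_nbij'
    (fun q => (q.1 ∆ pathEdges (symmGraph q.1 q.2) x y,
               q.2 ∆ pathEdges (symmGraph q.1 q.2) x y))
    (fun q => (q.1 ∆ pathEdges (symmGraph q.1 q.2) x y,
               q.2 ∆ pathEdges (symmGraph q.1 q.2) x y)) ?_ ?_ ?_ ?_ ?_
  · intro q hq
    simp only [Finset.mem_filter, Finset.mem_univ, true_and] at hq ⊢
    obtain ⟨hq1, hq2, hqc⟩ := hq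
    have hreach : (symmGraph q.1 q.2).Reachable x y := hqc (x, y) (List.mem_cons_self)
    obtain ⟨p, hp, hpe⟩ := pathEdges_spec hreach
    obtain ⟨hc1, hc2⟩ := switch_pair hdisj' hx1 hx2 hy1 hy2 hxy hq1 hq2 p hp
    rw [hpe] at hc1 hc2
    refine ⟨hc1, hc2, ?_⟩
    intro c hc
    rw [symmGraph_swap]
    exact hqc c hc
  · intro q hq
    simp only [Finset.mem_filter, Finset.mem_univ, true_and] at hq ⊢
    obtain ⟨hq1, hq2, hqc⟩ := hq
    have hreach : (symmGraph q.1 q.2).Reachable x y := hqc (x, y) (List.mem_cons_self)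
    obtain ⟨p, hp, hpe⟩ := pathEdges_spec hreach
    obtain ⟨hc1, hc2⟩ := switch_pair (M₁ := M₁) (M₂ := M₂) (x := y) (y := x)
      hdisj' hy1 hy2 hx1 hx2 hxy.symm hq1 hq2 p.reverse hp.reverse
    have hre : p.reverse.edges.toFinset = pathEdges (symmGraph q.1 q.2) x y := by
      rw [SimpleGraph.Walk.edges_reverse, List.toFinset_reverse, hpe]
    rw [hre] at hc1 hc2
    refine ⟨hc1, hc2, ?_⟩
    intro c hc
    rw [symmGraph_swap]
    exact hqc c hc
  · intro q _
    have hg : pathEdges (symmGraph (q.1 ∆ pathEdges (symmGraph q.1 q.2) x y)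
        (q.2 ∆ pathEdges (symmGraph q.1 q.2) x y)) x y = pathEdges (symmGraph q.1 q.2) x y := by
      rw [symmGraph_swap]
    refine Prod.ext ?_ ?_
    · simp only [hg]
      exact symmDiff_symmDiff_cancel_right _ _
    · simp only [hg]
      exact symmDiff_symmDiff_cancel_right _ _
  · intro q _
    have hg : pathEdges (symmGraph (q.1 ∆ pathEdges (symmGraph q.1 q.2) x y)
        (q.2 ∆ pathEdges (symmGraph q.1 q.2) x y)) x y = pathEdges (symmGraph q.1 q.2) x y := by
      rw [symmGraph_swap]
    refine Prod.ext ?_ ?_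
    · simp only [hg]
      exact symmDiff_symmDiff_cancel_right _ _
    · simp only [hg]
      exact symmDiff_symmDiff_cancel_right _ _
  · intro q _
    exact (prod_swap_aux K (pathEdges_subset_symmDiff q.1 q.2 x y)).symm
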